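/- arXiv:1010.2247 — 2 statements merged into one kernel-verified Lean document; each statement's English description precedes it below -/
import Mathlib

section
/- Let f : ℝⁿ → ℝⁿ, let x* : ℝ → ℝⁿ be differentiable with (x*)'(τ) = f(x*(τ)) for all τ, and let z : ℝ → ℝⁿ be differentiable. Let x : ℝ → ℝⁿ be differentiable with x'(t) = f(x(t)) for all t, and let τ : ℝ → ℝ be differentiable such that the transversality constraint ⟨z(τ(t)), x(t) − x*(τ(t))⟩ = 0 holds for all t (inner product in ℝⁿ). Fix a time t and suppose the denominator D = ⟨z(τ(t)), f(x*(τ(t)))⟩ − ⟨z'(τ(t)), x(t) − x*(τ(t))⟩ is nonzero. Then τ'(t) = ⟨z(τ(t)), f(x(t))⟩ / D. -/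
open RealInnerProductSpace

/-- The retiming dynamics of the transverse coordinates: if the phase variable
`τ(t)` satisfies the transversality constraint `⟪z(τ(t)), x(t) − x*(τ(t))⟫ = 0`
along a trajectory `x` of `ẋ = f(x)`, then wherever the denominator
`D = ⟪z(τ), f(x*(τ))⟫ − ⟪z'(τ), x − x*(τ)⟫` is nonzero,
`τ̇ = ⟪z(τ), f(x)⟫ / D`. -/
theorem retiming_dynamics
    {n : ℕ} (f : EuclideanSpace ℝ (Fin n) → EuclideanSpace ℝ (Fin n))
    (xstar : ℝ → EuclideanSpace ℝ (Fin n))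
    (hxstar : ∀ s : ℝ, HasDerivAt xstar (f (xstar s)) s)
    (z : ℝ → EuclideanSpace ℝ (Fin n)) (hz : Differentiable ℝ z)
    (x : ℝ → EuclideanSpace ℝ (Fin n))
    (hx : ∀ t : ℝ, HasDerivAt x (f (x t)) t)
    (τ : ℝ → ℝ) (hτ : Differentiable ℝ τ)
    (hconstraint : ∀ t : ℝ, ⟪z (τ t), x t - xstar (τ t)⟫ = 0)
    (t : ℝ)
    (hD : ⟪z (τ t), f (xstar (τ t))⟫ - ⟪deriv z (τ t), x t - xstar (τ t)⟫ ≠ 0) :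
    deriv τ t = ⟪z (τ t), f (x t)⟫ /
      (⟪z (τ t), f (xstar (τ t))⟫ - ⟪deriv z (τ t), x t - xstar (τ t)⟫) := by
  have hτt : HasDerivAt τ (deriv τ t) t := (hτ t).hasDerivAt
  have hzd : HasDerivAt z (deriv z (τ t)) (τ t) := (hz (τ t)).hasDerivAt
  -- u t = z (τ t)
  have hu : HasDerivAt (fun s => z (τ s)) (deriv τ t • deriv z (τ t)) t := by
    exact hzd.scomp t hτt
  -- xstar ∘ τ
  have hxsτ : HasDerivAt (fun s => xstar (τ s)) (deriv τ t • f (xstar (τ t))) t := by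
    exact (hxstar (τ t)).scomp t hτt
  have hv : HasDerivAt (fun s => x s - xstar (τ s))
      (f (x t) - deriv τ t • f (xstar (τ t))) t := (hx t).sub hxsτ
  have hg : HasDerivAt (fun s => ⟪z (τ s), x s - xstar (τ s)⟫)
      (⟪deriv τ t • deriv z (τ t), x t - xstar (τ t)⟫ +
        ⟪z (τ t), f (x t) - deriv τ t • f (xstar (τ t))⟫) t := by
    have := hu.inner ℝ hv
    rw [add_comm] at this
    exact this
  have hg0 : HasDerivAt (fun s => ⟪z (τ s), x s - xstar (τ s)⟫) 0 t := by
    have : (fun s => ⟪z (τ s), x s - xstar (τ s)⟫) = fun _ => (0:ℝ) := by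
      funext s; exact hconstraint s
    rw [this]; exact hasDerivAt_const t 0
  have heq := hg.unique hg0
  rw [eq_div_iff hD]
  simp only [inner_sub_right, real_inner_smul_left, real_inner_smul_right] at heq ⊢
  ring_nf
  ring_nf at heq
  linarith
end

section
/- Let f : ℝⁿ → ℝⁿ, let x* : ℝ → ℝⁿ be differentiable with (x*)'(τ) = f(x*(τ)) for all τ, and let Π : ℝ → ℝ^{(n−1)×n} be a differentiable matrix-valued function. Let x : ℝ → ℝⁿ be differentiable with x'(t) = f(x(t)) for all t, and let τ : ℝ → ℝ be differentiable. Define x⊥(t) = Π(τ(t))(x(t) − x*(τ(t))), and assume that for all t the reconstruction identity x(t) − x*(τ(t)) = Π(τ(t))ᵀ x⊥(t) holds. Then x⊥ is differentiable and for all t: x⊥'(t) = τ'(t)·Π'(τ(t))·Π(τ(t))ᵀ·x⊥(t) + Π(τ(t))·f(x*(τ(t)) + Π(τ(t))ᵀ x⊥(t)) − Π(τ(t))·f(x*(τ(t)))·τ'(t). -/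
open Matrix

/-- The continuous transverse dynamics: with projections `Π(τ) ∈ ℝ^{(n−1)×n}`,
transversal coordinate `x⊥(t) = Π(τ(t))(x(t) − x*(τ(t)))`, and reconstruction
identity `x(t) − x*(τ(t)) = Π(τ(t))ᵀ x⊥(t)`, one has
`ẋ⊥ = τ̇ Π'(τ)Π(τ)ᵀ x⊥ + Π(τ) f(x*(τ) + Π(τ)ᵀ x⊥) − Π(τ) f(x*(τ)) τ̇`. -/
theorem transverse_dynamics
    {n : ℕ} (f : (Fin n → ℝ) → (Fin n → ℝ))
    (xstar : ℝ → (Fin n → ℝ))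
    (hxstar : ∀ s : ℝ, HasDerivAt xstar (f (xstar s)) s)
    (Pi dPi : ℝ → Matrix (Fin (n - 1)) (Fin n) ℝ)
    (hPi : ∀ (s : ℝ) (i : Fin (n - 1)) (j : Fin n),
      HasDerivAt (fun u => Pi u i j) (dPi s i j) s)
    (x : ℝ → (Fin n → ℝ)) (hx : ∀ t : ℝ, HasDerivAt x (f (x t)) t)
    (τ : ℝ → ℝ) (dτ : ℝ → ℝ) (hτ : ∀ t : ℝ, HasDerivAt τ (dτ t) t)
    (xperp : ℝ → (Fin (n - 1) → ℝ))
    (hxperp : ∀ t : ℝ, xperp t = (Pi (τ t)).mulVec (x t - xstar (τ t)))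
    (hrecon : ∀ t : ℝ, x t - xstar (τ t) = (Pi (τ t))ᵀ.mulVec (xperp t)) :
    ∀ t : ℝ, HasDerivAt xperp
      (dτ t • (dPi (τ t) * (Pi (τ t))ᵀ).mulVec (xperp t)
        + (Pi (τ t)).mulVec (f (xstar (τ t) + (Pi (τ t))ᵀ.mulVec (xperp t)))
        - dτ t • (Pi (τ t)).mulVec (f (xstar (τ t)))) t := by
  intro t
  have hxeq : x t = xstar (τ t) + (Pi (τ t))ᵀ.mulVec (xperp t) := by
    have := hrecon t
    funext j
    have := congrFun this j
    simp only [_root_.Pi.sub_apply] at this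
    simp [_root_.Pi.add_apply]
    linarith
  have hD : HasDerivAt xperp
      (dτ t • (dPi (τ t)).mulVec (x t - xstar (τ t))
        + (Pi (τ t)).mulVec (f (x t))
        - dτ t • (Pi (τ t)).mulVec (f (xstar (τ t)))) t := by
    have hfun : xperp = fun s => (Pi (τ s)).mulVec (x s - xstar (τ s)) :=
      funext hxperp
    rw [hfun]
    rw [hasDerivAt_pi]
    intro i
    have hcomp : ∀ j : Fin n,
        HasDerivAt (fun s => Pi (τ s) i j * (x s j - xstar (τ s) j))
          ((dPi (τ t) i j * dτ t) * (x t j - xstar (τ t) j)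
            + Pi (τ t) i j * (f (x t) j - f (xstar (τ t)) j * dτ t)) t := by
      intro j
      have h1 : HasDerivAt (fun s => Pi (τ s) i j) (dPi (τ t) i j * dτ t) t :=
        (hPi (τ t) i j).comp t (hτ t)
      have h2 : HasDerivAt (fun s => x s j) (f (x t) j) t :=
        hasDerivAt_pi.mp (hx t) j
      have h3 : HasDerivAt (fun s => xstar (τ s) j) (f (xstar (τ t)) j * dτ t) t :=
        ((hasDerivAt_pi.mp (hxstar (τ t)) j).comp t (hτ t))
      exact h1.mul (h2.sub h3)
    have := HasDerivAt.fun_sum (fun j (_ : j ∈ Finset.univ) => hcomp j)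
    convert this using 1
    · rfl
    · simp only [mulVec, dotProduct, _root_.Pi.add_apply, _root_.Pi.sub_apply, _root_.Pi.smul_apply,
        smul_eq_mul, Finset.mul_sum, ← Finset.sum_add_distrib, ← Finset.sum_sub_distrib]
      apply Finset.sum_congr rfl
      intro j _
      ring
  have hkey : (dPi (τ t)).mulVec (x t - xstar (τ t))
      = (dPi (τ t) * (Pi (τ t))ᵀ).mulVec (xperp t) := by
    rw [hrecon t, ← mulVec_mulVec]
  rw [hkey, hxeq] at hD
  convert hD using 2
end
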